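/- If a functional property ψ : Nat.Partrec.Code → Prop is captured by some language L, then ψ is Σ⁰₃: there exists a decidable relation R (ComputablePred on Nat.Partrec.Code × ℕ × ℕ × ℕ) such that for every code g, ψ g ↔ ∃ a : ℕ, ∀ b : ℕ, ∃ c : ℕ, R (g, a, b, c). -/

import Mathlib

open Nat.Partrec Nat.Partrec.Code

noncomputable def cfsFun (L : Set Nat.Partrec.Code) (x : Nat.Partrec.Code × ℕ × ℕ × ℕ) : Bool :=
  let g := x.1
  let c' := Denumerable.ofNat Nat.Partrec.Code x.2.1
  let n := x.2.2.1.unpair.1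
  let k := x.2.2.1.unpair.2.unpair.1
  let s := x.2.2.1.unpair.2.unpair.2
  let c := x.2.2.2
  @decide (c' ∈ L) (Classical.dec _) &&
    ((!decide (evaln s c' n = some k) || decide (evaln c g n = some k)) &&
     (!decide (evaln s g n = some k) || decide (evaln c c' n = some k)))

theorem cfsFun_eq (L : Set Nat.Partrec.Code) (x : Nat.Partrec.Code × ℕ × ℕ × ℕ) :
    cfsFun L x = true ↔
      (Denumerable.ofNat Nat.Partrec.Code x.2.1 ∈ L ∧
        ((evaln x.2.2.1.unpair.2.unpair.2 (Denumerable.ofNat Nat.Partrec.Code x.2.1)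
            x.2.2.1.unpair.1 = some x.2.2.1.unpair.2.unpair.1 →
          evaln x.2.2.2 x.1 x.2.2.1.unpair.1 = some x.2.2.1.unpair.2.unpair.1) ∧
         (evaln x.2.2.1.unpair.2.unpair.2 x.1 x.2.2.1.unpair.1 = some x.2.2.1.unpair.2.unpair.1 →
          evaln x.2.2.2 (Denumerable.ofNat Nat.Partrec.Code x.2.1) x.2.2.1.unpair.1 =
            some x.2.2.1.unpair.2.unpair.1))) := by
  simp [cfsFun, imp_iff_not_or, or_comm]

theorem captured_functional_sigma03 (ψ : Nat.Partrec.Code → Prop)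
    (hfunc : ∀ c c' : Nat.Partrec.Code, c.eval = c'.eval → (ψ c ↔ ψ c'))
    (L : Set Nat.Partrec.Code) (hL : ComputablePred (· ∈ L))
    (hsound : ∀ c ∈ L, ψ c)
    (hcomplete : ∀ c : Nat.Partrec.Code, ψ c → ∃ c' ∈ L, c'.eval = c.eval) :
    ∃ R : Nat.Partrec.Code × ℕ × ℕ × ℕ → Prop, ComputablePred R ∧
      ∀ g : Nat.Partrec.Code, ψ g ↔ ∃ a : ℕ, ∀ b : ℕ, ∃ c : ℕ, R (g, a, b, c) := by
  classical
  obtain ⟨_, hLc⟩ := hL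
  refine ⟨fun x => cfsFun L x = true, ?_, ?_⟩
  · rw [ComputablePred.computable_iff]
    refine ⟨cfsFun L, ?_, rfl⟩
    have pg : Primrec fun x : Nat.Partrec.Code × ℕ × ℕ × ℕ => x.1 := Primrec.fst
    have pa : Primrec fun x : Nat.Partrec.Code × ℕ × ℕ × ℕ => x.2.1 :=
      Primrec.fst.comp Primrec.snd
    have pb : Primrec fun x : Nat.Partrec.Code × ℕ × ℕ × ℕ => x.2.2.1 :=
      Primrec.fst.comp (Primrec.snd.comp Primrec.snd)
    have pc : Primrec fun x : Nat.Partrec.Code × ℕ × ℕ × ℕ => x.2.2.2 :=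
      Primrec.snd.comp (Primrec.snd.comp Primrec.snd)
    have pc' : Primrec fun x : Nat.Partrec.Code × ℕ × ℕ × ℕ =>
        Denumerable.ofNat Nat.Partrec.Code x.2.1 := (Primrec.ofNat _).comp pa
    have pn : Primrec fun x : Nat.Partrec.Code × ℕ × ℕ × ℕ => x.2.2.1.unpair.1 :=
      (Primrec.fst.comp Primrec.unpair).comp pb
    have pk : Primrec fun x : Nat.Partrec.Code × ℕ × ℕ × ℕ => x.2.2.1.unpair.2.unpair.1 :=
      (Primrec.fst.comp (Primrec.unpair.comp (Primrec.snd.comp Primrec.unpair))).comp pb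
    have ps : Primrec fun x : Nat.Partrec.Code × ℕ × ℕ × ℕ => x.2.2.1.unpair.2.unpair.2 :=
      (Primrec.snd.comp (Primrec.unpair.comp (Primrec.snd.comp Primrec.unpair))).comp pb
    have hev : Primrec fun p : (ℕ × Nat.Partrec.Code) × ℕ => evaln p.1.1 p.1.2 p.2 := primrec_evaln
    have psk : Primrec fun x : Nat.Partrec.Code × ℕ × ℕ × ℕ =>
        (some x.2.2.1.unpair.2.unpair.1 : Option ℕ) := Primrec.option_some.comp pk
    have e1 := hev.comp ((ps.pair pc').pair pn)
    have e2 := hev.comp ((pc.pair pg).pair pn)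
    have e3 := hev.comp ((ps.pair pg).pair pn)
    have e4 := hev.comp ((pc.pair pc').pair pn)
    have d1 := (Primrec.eq.comp e1 psk).decide
    have d2 := (Primrec.eq.comp e2 psk).decide
    have d3 := (Primrec.eq.comp e3 psk).decide
    have d4 := (Primrec.eq.comp e4 psk).decide
    have q : Primrec fun x : Nat.Partrec.Code × ℕ × ℕ × ℕ =>
        ((!decide (evaln x.2.2.1.unpair.2.unpair.2 (Denumerable.ofNat Nat.Partrec.Code x.2.1)
              x.2.2.1.unpair.1 = some x.2.2.1.unpair.2.unpair.1) ||
          decide (evaln x.2.2.2 x.1 x.2.2.1.unpair.1 = some x.2.2.1.unpair.2.unpair.1)) &&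
         (!decide (evaln x.2.2.1.unpair.2.unpair.2 x.1 x.2.2.1.unpair.1 =
              some x.2.2.1.unpair.2.unpair.1) ||
          decide (evaln x.2.2.2 (Denumerable.ofNat Nat.Partrec.Code x.2.1) x.2.2.1.unpair.1 =
              some x.2.2.1.unpair.2.unpair.1))) :=
      Primrec.and.comp (Primrec.or.comp (Primrec.not.comp d1) d2)
        (Primrec.or.comp (Primrec.not.comp d3) d4)
    have hmem : Computable fun x : Nat.Partrec.Code × ℕ × ℕ × ℕ =>
        decide (Denumerable.ofNat Nat.Partrec.Code x.2.1 ∈ L) := by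
      exact hLc.comp pc'.to_comp
    have : Computable fun x : Nat.Partrec.Code × ℕ × ℕ × ℕ =>
        cond (decide (Denumerable.ofNat Nat.Partrec.Code x.2.1 ∈ L))
          (((!decide (evaln x.2.2.1.unpair.2.unpair.2 (Denumerable.ofNat Nat.Partrec.Code x.2.1)
              x.2.2.1.unpair.1 = some x.2.2.1.unpair.2.unpair.1) ||
          decide (evaln x.2.2.2 x.1 x.2.2.1.unpair.1 = some x.2.2.1.unpair.2.unpair.1)) &&
         (!decide (evaln x.2.2.1.unpair.2.unpair.2 x.1 x.2.2.1.unpair.1 =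
              some x.2.2.1.unpair.2.unpair.1) ||
          decide (evaln x.2.2.2 (Denumerable.ofNat Nat.Partrec.Code x.2.1) x.2.2.1.unpair.1 =
              some x.2.2.1.unpair.2.unpair.1)))) false :=
      Computable.cond hmem q.to_comp (Computable.const false)
    convert this using 1
    funext x
    show cfsFun L x = _
    unfold cfsFun
    simp only []
    rcases h : (decide (Denumerable.ofNat Nat.Partrec.Code x.2.1 ∈ L) : Bool) with _ | _
    · have h2 : (@decide (Denumerable.ofNat Nat.Partrec.Code x.2.1 ∈ L) (Classical.dec _)) =
        false := by rw [← h]; apply decide_eq_decide.mpr; rfl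
      simp [h2]
    · have h2 : (@decide (Denumerable.ofNat Nat.Partrec.Code x.2.1 ∈ L) (Classical.dec _)) =
        true := by rw [← h]; apply decide_eq_decide.mpr; rfl
      simp [h2]
  · intro g
    constructor
    · rintro hg
      obtain ⟨c', hc'L, hceq⟩ := hcomplete g hg
      refine ⟨Encodable.encode c', fun b => ?_⟩
      set n := b.unpair.1
      set k := b.unpair.2.unpair.1
      set s := b.unpair.2.unpair.2
      -- find witnesses
      by_cases h1 : evaln s c' n = some k
      · have hk : k ∈ c'.eval n := evaln_sound h1
        rw [hceq] at hk
        obtain ⟨t1, ht1⟩ := evaln_complete.mp hk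
        by_cases h3 : evaln s g n = some k
        · have hk2 : k ∈ g.eval n := evaln_sound h3
          rw [← hceq] at hk2
          obtain ⟨t2, ht2⟩ := evaln_complete.mp hk2
          refine ⟨max t1 t2, (cfsFun_eq L _).mpr ?_⟩
          simp only [Denumerable.ofNat_encode]
          exact ⟨hc'L, fun _ => evaln_mono (le_max_left _ _) ht1,
            fun _ => evaln_mono (le_max_right _ _) ht2⟩
        · refine ⟨t1, (cfsFun_eq L _).mpr ?_⟩
          simp only [Denumerable.ofNat_encode]
          exact ⟨hc'L, fun _ => ht1, fun h => absurd h h3⟩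
      · by_cases h3 : evaln s g n = some k
        · have hk2 : k ∈ g.eval n := evaln_sound h3
          rw [← hceq] at hk2
          obtain ⟨t2, ht2⟩ := evaln_complete.mp hk2
          refine ⟨t2, (cfsFun_eq L _).mpr ?_⟩
          simp only [Denumerable.ofNat_encode]
          exact ⟨hc'L, fun h => absurd h h1, fun _ => ht2⟩
        · refine ⟨0, (cfsFun_eq L _).mpr ?_⟩
          simp only [Denumerable.ofNat_encode]
          exact ⟨hc'L, fun h => absurd h h1, fun h => absurd h h3⟩
    · rintro ⟨a, ha⟩
      set c' := Denumerable.ofNat Nat.Partrec.Code a with hc'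
      have hmem : c' ∈ L := by
        obtain ⟨c, hc⟩ := ha 0
        exact ((cfsFun_eq L _).mp hc).1
      have heq : c'.eval = g.eval := by
        funext n
        apply Part.ext
        intro k
        constructor
        · intro hk
          obtain ⟨s, hs⟩ := evaln_complete.mp hk
          obtain ⟨c, hc⟩ := ha (Nat.pair n (Nat.pair k s))
          have := (cfsFun_eq L _).mp hc
          simp only [Nat.unpair_pair] at this
          exact evaln_sound (this.2.1 hs)
        · intro hk
          obtain ⟨s, hs⟩ := evaln_complete.mp hk
          obtain ⟨c, hc⟩ := ha (Nat.pair n (Nat.pair k s))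
          have := (cfsFun_eq L _).mp hc
          simp only [Nat.unpair_pair] at this
          exact evaln_sound (this.2.2 hs)
      exact (hfunc c' g heq).mp (hsound c' hmem)
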